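/- Let δ ∈ (0,1), let μ be a distribution on {0,1}^n, let ξ be a detailing of μ with respect to a finite set A, and let ξ' be a refinement of ξ with respect to a finite set B such that Ind(ξ') − Ind(ξ) ≤ δ. Let η = ξ'|_{2,3} (the marginal of ξ' on A×B), let ξ_⟨η⟩ be the flat refinement of ξ with respect to η, and let Λ' and Λ_⟨B⟩ be the type distributions of ξ' and ξ_⟨η⟩ respectively. Then d_EM^η(Λ', Λ_⟨B⟩) ≤ √δ. -/
import Mathlib


open scoped BigOperators

namespace HugeObject

noncomputable section

/-- A finitely supported probability distribution on `Ω`, given by its mass function. -/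
def IsDist {Ω : Type*} (μ : Ω → ℝ) : Prop :=
  (∀ x, 0 ≤ μ x) ∧ (Function.support μ).Finite ∧ ∑ᶠ x, μ x = 1

/-- Total variation distance between two mass functions. -/
def dTV {Ω : Type*} (μ τ : Ω → ℝ) : ℝ :=
  (1 / 2) * ∑ᶠ x, |μ x - τ x|

/-- `T` is a transfer distribution (coupling) between `μ` and `τ`. -/
def IsCoupling {A B : Type*} (T : A × B → ℝ) (μ : A → ℝ) (τ : B → ℝ) : Prop :=
  IsDist T ∧ (∀ a, ∑ᶠ b, T (a, b) = μ a) ∧ (∀ b, ∑ᶠ a, T (a, b) = τ b)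

/-- Earth Mover distance with respect to a distance function `d`: the infimum, over
all transfer distributions between `μ` and `τ`, of the expected distance. -/
def dEM {Ω : Type*} (d : Ω → Ω → ℝ) (μ τ : Ω → ℝ) : ℝ :=
  sInf {c | ∃ T : Ω × Ω → ℝ, IsCoupling T μ τ ∧ c = ∑ᶠ p : Ω × Ω, T p * d p.1 p.2}

/-- η-weighted ℓ1 distance between vectors. -/
def wl1 {A : Type*} (η : A → ℝ) (x y : A → ℝ) : ℝ := ∑ᶠ a, η a * |x a - y a|

/-- A distribution on vectors is supported on `[0,1]^A`. -/
def SuppIn01 {A : Type*} (Λ : (A → ℝ) → ℝ) : Prop :=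
  ∀ t, Λ t ≠ 0 → ∀ a, t a ∈ Set.Icc (0 : ℝ) 1

/-- Empirical distribution of the tuple `t` (distribution of `t I` for uniform `I`). -/
def empDist {n : ℕ} {α : Type*} (t : Fin n → α) : α → ℝ :=
  fun u => (Nat.card {i : Fin n // t i = u} : ℝ) / n

/-- Normalized Hamming distance on `{0,1}^n`. -/
def normHamming (n : ℕ) (x y : Fin n → Bool) : ℝ :=
  (Nat.card {i : Fin n // x i ≠ y i} : ℝ) / n

section Detailing

variable {n : ℕ} {A : Type*} [Fintype A]

/-- Weight distribution (second marginal) of a detailing. -/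
def weight (ξ : (Fin n → Bool) × A → ℝ) (a : A) : ℝ := ∑ x : Fin n → Bool, ξ (x, a)

/-- `ξ` is a detailing of `μ` with respect to `A`: a distribution on
`{0,1}^n × A` whose first marginal is `μ`. -/
def IsDetailing (ξ : (Fin n → Bool) × A → ℝ) (μ : (Fin n → Bool) → ℝ) : Prop :=
  IsDist ξ ∧ ∀ x, ∑ a : A, ξ (x, a) = μ x

/-- Component distribution `μ_a` of a detailing. -/
def component (ξ : (Fin n → Bool) × A → ℝ) (a : A) : (Fin n → Bool) → ℝ :=
  fun x => ξ (x, a) / weight ξ a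

/-- The type of index `i`: `t_i a = Pr_{x ~ μ_a} [x i = 1]` (0 when the weight vanishes). -/
def typeOf (ξ : (Fin n → Bool) × A → ℝ) (i : Fin n) : A → ℝ :=
  fun a => (∑ x : Fin n → Bool, if x i then ξ (x, a) else 0) / weight ξ a

/-- The type distribution of a detailing: distribution of `typeOf ξ I` for uniform `I`. -/
def typeDist (ξ : (Fin n → Bool) × A → ℝ) : (A → ℝ) → ℝ :=
  empDist (fun i : Fin n => typeOf ξ i)

/-- The index of a detailing. -/
def ind (ξ : (Fin n → Bool) × A → ℝ) : ℝ :=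
  (∑ i : Fin n, ∑ a : A, weight ξ a * typeOf ξ i a ^ 2) / n

end Detailing

section Goodness

variable {n q : ℕ}

/-- Marginal of coordinate `j`. -/
def margAt (ν : (Fin n → Bool) → ℝ) (j : Fin n) : Bool → ℝ :=
  fun b => ∑ x : Fin n → Bool, if x j = b then ν x else 0

/-- Joint distribution of the coordinates listed in `J`. -/
def jointAt (ν : (Fin n → Bool) → ℝ) (J : Fin q → Fin n) : (Fin q → Bool) → ℝ :=
  fun y => ∑ x : Fin n → Bool, if ∀ ℓ, x (J ℓ) = y ℓ then ν x else 0

/-- The tuple `J` is ε-independent with respect to `ν`. -/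
def EpsIndep (ε : ℝ) (ν : (Fin n → Bool) → ℝ) (J : Fin q → Fin n) : Prop :=
  dTV (jointAt ν J) (fun y => ∏ ℓ, margAt ν (J ℓ) (y ℓ)) ≤ ε

/-- A distribution on `{0,1}^n` is (ε,q)-good. -/
def IsGoodDist (ε : ℝ) (q : ℕ) (ν : (Fin n → Bool) → ℝ) : Prop :=
  (1 - ε) * (n : ℝ) ^ q ≤ (Nat.card {J : Fin q → Fin n // EpsIndep ε ν J} : ℝ)

/-- A detailing is (ε,q)-good. -/
def IsGoodDetailing {A : Type*} [Fintype A] (ε : ℝ) (q : ℕ)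
    (ξ : (Fin n → Bool) × A → ℝ) : Prop :=
  ∃ J : Finset A, 1 - ε ≤ ∑ a ∈ J, weight ξ a ∧ ∀ a ∈ J, IsGoodDist ε q (component ξ a)

end Goodness

/-- The simulated distribution `D_sim(η, Λ)` on `{0,1}^{s×q}`. -/
def Dsim {A : Type*} [Fintype A] (s q : ℕ) (η : A → ℝ) (Λ : (A → ℝ) → ℝ) :
    (Fin s → Fin q → Bool) → ℝ :=
  fun M => ∑ᶠ T : Fin q → (A → ℝ),
    (∏ j, Λ (T j)) * ∑ a : Fin s → A, (∏ i, η (a i)) *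
      ∏ i : Fin s, ∏ j : Fin q, if M i j then T j (a i) else 1 - T j (a i)

/-- The canonical (s,q) test distribution `D_test` for `μ`. -/
def Dtest (s q n : ℕ) (μ : (Fin n → Bool) → ℝ) : (Fin s → Fin q → Bool) → ℝ :=
  fun M => (∑ J : Fin q → Fin n, ∑ x : Fin s → Fin n → Bool,
    (∏ i, μ (x i)) * (if ∀ i ℓ, x i (J ℓ) = M i ℓ then (1 : ℝ) else 0)) / (n : ℝ) ^ q

/-- Flat refinement of the detailing `ξ` with respect to `η` on `A × B`. -/
def flatRef {n : ℕ} {A B : Type*} [Fintype A] (ξ : (Fin n → Bool) × A → ℝ)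
    (η : A × B → ℝ) : (Fin n → Bool) × (A × B) → ℝ :=
  fun p => η p.2 * component ξ p.2.1 p.1

/-- One-step transition probability of the Change-types construction:
probability of outputting `yi` at a coordinate with source value `xi`,
source type value `h1` and target type value `h2`. -/
def flipStep (h1 h2 : ℝ) (xi yi : Bool) : ℝ :=
  if xi then (if yi then 1 - max 0 ((h1 - h2) / h1) else max 0 ((h1 - h2) / h1))
  else (if yi then max 0 ((h2 - h1) / (1 - h1)) else 1 - max 0 ((h2 - h1) / (1 - h1)))

/-- The output distribution `Ξ` of the Change-types construction. -/
def changeTypes {n : ℕ} {A B : Type*} [Fintype A] (ξ : (Fin n → Bool) × A → ℝ)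
    (η : A × B → ℝ) (H : Fin n → (A × B → ℝ) × (A × B → ℝ)) :
    (Fin n → Bool) × (Fin n → Bool) × (A × B) → ℝ :=
  fun p => η p.2.2 * component ξ p.2.2.1 p.1 *
    ∏ i, flipStep ((H i).1 p.2.2) ((H i).2 p.2.2) (p.1 i) (p.2.1 i)

/-- Pushforward of a mass function along `f`. -/
def push {α β : Type*} (f : α → β) (μ : α → ℝ) : β → ℝ :=
  fun b => ∑ᶠ a ∈ {a | f a = b}, μ a

/-- Rounding to the nearest integer multiple of `ρ`. -/
def roundMul (ρ x : ℝ) : ℝ := ρ * round (x / ρ)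

/-- Adjustment of `η` to `ν`. -/
def adjust {A B : Type*} [Fintype B] (ν : A → ℝ) (η : A × B → ℝ) : A × B → ℝ :=
  fun p => ν p.1 * (η p / ∑ b : B, η (p.1, b))

end
end HugeObject

open HugeObject

section AuxEmp

open Finset in
lemma HO_empDist_eq_filter {n : ℕ} {α : Type*} [DecidableEq α] (f : Fin n → α) (u : α) :
    empDist f u = ((Finset.univ.filter fun i => f i = u).card : ℝ) / n := by
  unfold HugeObject.empDist
  rw [Nat.card_eq_fintype_card, Fintype.card_subtype]

lemma HO_empDist_nonneg {n : ℕ} {α : Type*} (f : Fin n → α) (u : α) : 0 ≤ empDist f u := by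
  unfold HugeObject.empDist; positivity

lemma HO_empDist_support {n : ℕ} {α : Type*} (f : Fin n → α) :
    Function.support (empDist f) ⊆ Set.range f := by
  intro u hu
  by_contra h
  apply hu
  have : IsEmpty {i : Fin n // f i = u} := ⟨fun ⟨i, hi⟩ => h ⟨i, hi⟩⟩
  unfold HugeObject.empDist
  simp [Nat.card_of_isEmpty]

lemma HO_empDist_sum_mul {n : ℕ} {α : Type*} (f : Fin n → α) (g : α → ℝ) :
    ∑ᶠ u, empDist f u * g u = (∑ i, g (f i)) / n := by
  classical
  have hs : Function.support (fun u => empDist f u * g u) ⊆ ↑(Finset.univ.image f) := by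
    intro u hu
    obtain ⟨i, hi⟩ := HO_empDist_support f (left_ne_zero_of_mul hu)
    exact Finset.mem_coe.2 (Finset.mem_image.2 ⟨i, Finset.mem_univ i, hi⟩)
  rw [finsum_eq_sum_of_support_subset _ hs]
  have key : ∀ u, empDist f u * g u = (∑ i : Fin n, if f i = u then g u else 0) / n := by
    intro u
    rw [HO_empDist_eq_filter, div_mul_eq_mul_div]
    congr 1
    rw [← Finset.sum_filter, Finset.sum_const, nsmul_eq_mul]
  rw [Finset.sum_congr rfl fun u _ => key u, ← Finset.sum_div]
  congr 1
  rw [Finset.sum_comm]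
  refine Finset.sum_congr rfl fun i _ => ?_
  rw [Finset.sum_ite_eq]
  simp

lemma HO_empDist_marg_fst {n : ℕ} {α β : Type*} (h : Fin n → α × β) (u : α) :
    ∑ᶠ v, empDist h (u, v) = empDist (fun i => (h i).1) u := by
  classical
  have hs : Function.support (fun v => empDist h (u, v)) ⊆
      ↑(Finset.univ.image fun i => (h i).2) := by
    intro v hv
    obtain ⟨i, hi⟩ := HO_empDist_support h hv
    exact Finset.mem_coe.2 (Finset.mem_image.2 ⟨i, Finset.mem_univ i, congrArg Prod.snd hi⟩)
  rw [finsum_eq_sum_of_support_subset _ hs]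
  simp only [HO_empDist_eq_filter]
  rw [← Finset.sum_div]
  congr 1
  rw [← Nat.cast_sum]
  congr 1
  simp only [Finset.card_filter]
  rw [Finset.sum_comm]
  refine Finset.sum_congr rfl fun i _ => ?_
  by_cases hfi : (h i).1 = u
  · have heq : ∀ v, (if h i = (u, v) then (1:ℕ) else 0) = if (h i).2 = v then 1 else 0 := by
      intro v; congr 1; simp [Prod.ext_iff, hfi]
    rw [Finset.sum_congr rfl fun v _ => heq v, Finset.sum_ite_eq]
    simp [hfi]
  · have heq : ∀ v, (if h i = (u, v) then (1:ℕ) else 0) = 0 := by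
      intro v
      simp only [ite_eq_right_iff]
      intro hh
      exact absurd (congrArg Prod.fst hh) hfi
    rw [Finset.sum_congr rfl fun v _ => heq v]
    simp [hfi]

lemma HO_empDist_marg_snd {n : ℕ} {α β : Type*} (h : Fin n → α × β) (v : β) :
    ∑ᶠ u, empDist h (u, v) = empDist (fun i => (h i).2) v := by
  classical
  have hs : Function.support (fun u => empDist h (u, v)) ⊆
      ↑(Finset.univ.image fun i => (h i).1) := by
    intro u hu
    obtain ⟨i, hi⟩ := HO_empDist_support h hu
    exact Finset.mem_coe.2 (Finset.mem_image.2 ⟨i, Finset.mem_univ i, congrArg Prod.fst hi⟩)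
  rw [finsum_eq_sum_of_support_subset _ hs]
  simp only [HO_empDist_eq_filter]
  rw [← Finset.sum_div]
  congr 1
  rw [← Nat.cast_sum]
  congr 1
  simp only [Finset.card_filter]
  rw [Finset.sum_comm]
  refine Finset.sum_congr rfl fun i _ => ?_
  by_cases hfi : (h i).2 = v
  · have heq : ∀ u, (if h i = (u, v) then (1:ℕ) else 0) = if (h i).1 = u then 1 else 0 := by
      intro u; congr 1; simp [Prod.ext_iff, hfi]
    rw [Finset.sum_congr rfl fun u _ => heq u, Finset.sum_ite_eq]
    simp [hfi]
  · have heq : ∀ u, (if h i = (u, v) then (1:ℕ) else 0) = 0 := by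
      intro u
      simp only [ite_eq_right_iff]
      intro hh
      exact absurd (congrArg Prod.snd hh) hfi
    rw [Finset.sum_congr rfl fun u _ => heq u]
    simp [hfi]

lemma HO_empDist_sum_one {n : ℕ} (hn : 0 < n) {α : Type*} (f : Fin n → α) :
    ∑ᶠ u, empDist f u = 1 := by
  have h := HO_empDist_sum_mul f (fun _ => (1:ℝ))
  simp only [mul_one, Finset.sum_const, Finset.card_univ, Fintype.card_fin,
    nsmul_eq_mul] at h
  rw [h]
  have : (n:ℝ) ≠ 0 := Nat.cast_ne_zero.2 hn.ne'
  field_simp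

end AuxEmp


/-- if the refinement ξ' of ξ increases the index by at most δ,
then the type distribution of ξ' and the type distribution of the flat
refinement of ξ (with respect to the weight distribution of ξ') are √δ-close in
the weighted Earth Mover distance. -/
theorem refinement_type_dist_close {A B : Type*} [Fintype A] [Fintype B]
    (n : ℕ) (hn : 0 < n) (δ : ℝ) (hδ : δ ∈ Set.Ioo (0 : ℝ) 1)
    (μ : (Fin n → Bool) → ℝ) (hμ : IsDist μ)
    (ξ : (Fin n → Bool) × A → ℝ) (hξ : IsDetailing ξ μ)
    (ξ' : (Fin n → Bool) × (A × B) → ℝ) (hξ' : IsDetailing ξ' μ)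
    (href : ∀ x a, ∑ b : B, ξ' (x, (a, b)) = ξ (x, a))
    (hind : ind ξ' - ind ξ ≤ δ) :
    dEM (wl1 (weight ξ')) (typeDist ξ') (typeDist (flatRef ξ (weight ξ'))) ≤
      Real.sqrt δ := by
  classical
  obtain ⟨hδ0, hδ1⟩ := hδ
  have hnR : (0:ℝ) < n := by exact_mod_cast hn
  have hξ'nn : ∀ y, 0 ≤ ξ' y := hξ'.1.1
  have hξnn : ∀ y, 0 ≤ ξ y := hξ.1.1
  have hηnn : ∀ p, 0 ≤ weight ξ' p := fun p => Finset.sum_nonneg fun x _ => hξ'nn (x, p)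
  have hξ'zero : ∀ p, weight ξ' p = 0 → ∀ x, ξ' (x, p) = 0 := by
    intro p hp x
    exact (Finset.sum_eq_zero_iff_of_nonneg fun x _ => hξ'nn (x, p)).1 hp x (Finset.mem_univ x)
  have hξzero : ∀ a, weight ξ a = 0 → ∀ x, ξ (x, a) = 0 := by
    intro a ha x
    exact (Finset.sum_eq_zero_iff_of_nonneg fun x _ => hξnn (x, a)).1 ha x (Finset.mem_univ x)
  have hsumη : ∀ a, ∑ b : B, weight ξ' (a, b) = weight ξ a := by
    intro a
    calc ∑ b : B, weight ξ' (a, b) = ∑ b : B, ∑ x, ξ' (x, (a, b)) := rfl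
      _ = ∑ x, ∑ b : B, ξ' (x, (a, b)) := Finset.sum_comm
      _ = ∑ x, ξ (x, a) := Finset.sum_congr rfl fun x _ => href x a
      _ = weight ξ a := rfl
  have hmulN' : ∀ (i : Fin n) (p : A × B),
      weight ξ' p * typeOf ξ' i p = ∑ x, if x i then ξ' (x, p) else 0 := by
    intro i p
    by_cases hp : weight ξ' p = 0
    · have hz : (∑ x, if x i then ξ' (x, p) else 0) = 0 :=
        Finset.sum_eq_zero fun x _ => by rw [hξ'zero p hp x]; simp
      rw [hp, hz, zero_mul]
    · unfold HugeObject.typeOf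
      rw [mul_comm, div_mul_cancel₀ _ hp]
  have hmulN : ∀ (i : Fin n) (a : A),
      weight ξ a * typeOf ξ i a = ∑ x, if x i then ξ (x, a) else 0 := by
    intro i a
    by_cases ha : weight ξ a = 0
    · have hz : (∑ x, if x i then ξ (x, a) else 0) = 0 :=
        Finset.sum_eq_zero fun x _ => by rw [hξzero a ha x]; simp
      rw [ha, hz, zero_mul]
    · unfold HugeObject.typeOf
      rw [mul_comm, div_mul_cancel₀ _ ha]
  have hsumN' : ∀ (i : Fin n) (a : A),
      ∑ b : B, ∑ x, (if x i then ξ' (x, (a, b)) else 0) = ∑ x, if x i then ξ (x, a) else 0 := by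
    intro i a
    rw [Finset.sum_comm]
    refine Finset.sum_congr rfl fun x _ => ?_
    by_cases hx : x i
    · simp only [hx, if_true]
      exact href x a
    · simp [hx]
  have hkey1 : ∀ i : Fin n, ∑ p : A × B, weight ξ' p * typeOf ξ' i p * typeOf ξ i p.1
      = ∑ a : A, weight ξ a * typeOf ξ i a ^ 2 := by
    intro i
    rw [Fintype.sum_prod_type]
    refine Finset.sum_congr rfl fun a _ => ?_
    calc ∑ b : B, weight ξ' (a, b) * typeOf ξ' i (a, b) * typeOf ξ i a
        = (∑ b : B, weight ξ' (a, b) * typeOf ξ' i (a, b)) * typeOf ξ i a :=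
          (Finset.sum_mul _ _ _).symm
      _ = (∑ b : B, ∑ x, if x i then ξ' (x, (a, b)) else 0) * typeOf ξ i a := by
          rw [Finset.sum_congr rfl fun b _ => hmulN' i (a, b)]
      _ = (∑ x, if x i then ξ (x, a) else 0) * typeOf ξ i a := by rw [hsumN' i a]
      _ = weight ξ a * typeOf ξ i a * typeOf ξ i a := by rw [← hmulN i a]
      _ = weight ξ a * typeOf ξ i a ^ 2 := by ring
  have hkey2 : ∀ i : Fin n, ∑ p : A × B, weight ξ' p * typeOf ξ i p.1 ^ 2
      = ∑ a : A, weight ξ a * typeOf ξ i a ^ 2 := by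
    intro i
    rw [Fintype.sum_prod_type]
    refine Finset.sum_congr rfl fun a _ => ?_
    show ∑ b : B, weight ξ' (a, b) * typeOf ξ i a ^ 2 = _
    rw [← Finset.sum_mul, hsumη a]
  have hS : ∀ i : Fin n, ∑ p : A × B, weight ξ' p * (typeOf ξ' i p - typeOf ξ i p.1) ^ 2
      = (∑ p : A × B, weight ξ' p * typeOf ξ' i p ^ 2)
        - ∑ a : A, weight ξ a * typeOf ξ i a ^ 2 := by
    intro i
    have hexp : ∀ p : A × B, weight ξ' p * (typeOf ξ' i p - typeOf ξ i p.1) ^ 2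
        = weight ξ' p * typeOf ξ' i p ^ 2
          - 2 * (weight ξ' p * typeOf ξ' i p * typeOf ξ i p.1)
          + weight ξ' p * typeOf ξ i p.1 ^ 2 := fun p => by ring
    rw [Finset.sum_congr rfl fun p _ => hexp p, Finset.sum_add_distrib,
      Finset.sum_sub_distrib, ← Finset.mul_sum, hkey1 i, hkey2 i]
    ring
  have hDeq : ind ξ' - ind ξ
      = (∑ i, ∑ p : A × B, weight ξ' p * (typeOf ξ' i p - typeOf ξ i p.1) ^ 2) / n := by
    rw [Finset.sum_congr rfl fun i _ => hS i, Finset.sum_sub_distrib, sub_div]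
    rfl
  -- flat refinement types agree with the original types on the support of the weights
  have hflat : ∀ (i : Fin n) (p : A × B), weight ξ' p ≠ 0 →
      typeOf (flatRef ξ (weight ξ')) i p = typeOf ξ i p.1 := by
    intro i p hp
    have hw : weight ξ p.1 ≠ 0 := by
      intro h0
      apply hp
      have hle : weight ξ' p ≤ ∑ b : B, weight ξ' (p.1, b) :=
        Finset.single_le_sum (fun b _ => hηnn (p.1, b)) (Finset.mem_univ p.2)
      rw [hsumη p.1, h0] at hle
      exact le_antisymm hle (hηnn p)
    have hwflat : weight (flatRef ξ (weight ξ')) p = weight ξ' p := by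
      show (∑ x, weight ξ' p * (ξ (x, p.1) / weight ξ p.1)) = weight ξ' p
      rw [← Finset.mul_sum, ← Finset.sum_div]
      show weight ξ' p * (weight ξ p.1 / weight ξ p.1) = weight ξ' p
      rw [div_self hw, mul_one]
    have hnum : (∑ x, if x i then flatRef ξ (weight ξ') (x, p) else 0)
        = weight ξ' p * ((∑ x, if x i then ξ (x, p.1) else 0) / weight ξ p.1) := by
      calc (∑ x, if x i then flatRef ξ (weight ξ') (x, p) else 0)
          = ∑ x, weight ξ' p * ((if x i then ξ (x, p.1) else 0) / weight ξ p.1) := by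
            refine Finset.sum_congr rfl fun x _ => ?_
            by_cases hx : x i <;> simp [hx, flatRef, component]
        _ = weight ξ' p * ((∑ x, if x i then ξ (x, p.1) else 0) / weight ξ p.1) := by
            rw [← Finset.mul_sum, ← Finset.sum_div]
    unfold HugeObject.typeOf
    rw [hwflat, hnum, mul_div_cancel_left₀ _ hp]
  -- total mass of the weights
  have htot := hξ'.1.2.2
  rw [finsum_eq_sum_of_fintype] at htot
  have hη1 : ∑ p : A × B, weight ξ' p = 1 := by
    calc ∑ p : A × B, weight ξ' p = ∑ p : A × B, ∑ x, ξ' (x, p) := rfl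
      _ = ∑ x, ∑ p : A × B, ξ' (x, p) := Finset.sum_comm
      _ = ∑ y : (Fin n → Bool) × (A × B), ξ' y := (Fintype.sum_prod_type _).symm
      _ = 1 := htot
  -- the coupling
  set F : Fin n → ((A × B) → ℝ) × ((A × B) → ℝ) :=
    fun i => (typeOf ξ' i, typeOf (flatRef ξ (weight ξ')) i) with hF
  have hcoup : IsCoupling (empDist F) (typeDist ξ') (typeDist (flatRef ξ (weight ξ'))) := by
    refine ⟨⟨HO_empDist_nonneg F, (Set.finite_range F).subset (HO_empDist_support F),
      HO_empDist_sum_one hn F⟩, fun u => ?_, fun v => ?_⟩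
    · exact HO_empDist_marg_fst F u
    · exact HO_empDist_marg_snd F v
  set c : ℝ := ∑ᶠ p : (((A × B) → ℝ) × ((A × B) → ℝ)),
    empDist F p * wl1 (weight ξ') p.1 p.2 with hcdef
  have hmem : c ∈ {c | ∃ T : (((A × B) → ℝ) × ((A × B) → ℝ)) → ℝ,
      IsCoupling T (typeDist ξ') (typeDist (flatRef ξ (weight ξ'))) ∧
      c = ∑ᶠ p : (((A × B) → ℝ) × ((A × B) → ℝ)), T p * wl1 (weight ξ') p.1 p.2} :=
    ⟨empDist F, hcoup, hcdef⟩
  have hwl1nn : ∀ u v : (A × B) → ℝ, 0 ≤ wl1 (weight ξ') u v := fun u v =>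
    finsum_nonneg fun p => mul_nonneg (hηnn p) (abs_nonneg _)
  have hbdd : BddBelow {c | ∃ T : (((A × B) → ℝ) × ((A × B) → ℝ)) → ℝ,
      IsCoupling T (typeDist ξ') (typeDist (flatRef ξ (weight ξ'))) ∧
      c = ∑ᶠ p : (((A × B) → ℝ) × ((A × B) → ℝ)), T p * wl1 (weight ξ') p.1 p.2} := by
    refine ⟨0, ?_⟩
    rintro x ⟨T, hT, rfl⟩
    exact finsum_nonneg fun p => mul_nonneg (hT.1.1 p) (hwl1nn _ _)
  -- compute the cost of the coupling
  have hc : c = (∑ i, wl1 (weight ξ') (typeOf ξ' i) (typeOf (flatRef ξ (weight ξ')) i)) / n :=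
    HO_empDist_sum_mul F (fun p => wl1 (weight ξ') p.1 p.2)
  have hwl1 : ∀ i : Fin n, wl1 (weight ξ') (typeOf ξ' i) (typeOf (flatRef ξ (weight ξ')) i)
      = ∑ p : A × B, weight ξ' p * |typeOf ξ' i p - typeOf ξ i p.1| := by
    intro i
    unfold HugeObject.wl1
    rw [finsum_eq_sum_of_fintype]
    refine Finset.sum_congr rfl fun p _ => ?_
    by_cases hp : weight ξ' p = 0
    · rw [hp, zero_mul, zero_mul]
    · rw [hflat i p hp]
  have hcq : c = ∑ q : Fin n × (A × B),
      (weight ξ' q.2 / n) * |typeOf ξ' q.1 q.2 - typeOf ξ q.1 q.2.1| := by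
    rw [hc, Finset.sum_congr rfl fun i _ => hwl1 i]
    rw [Fintype.sum_prod_type, Finset.sum_div]
    refine Finset.sum_congr rfl fun i _ => ?_
    rw [Finset.sum_div]
    exact Finset.sum_congr rfl fun p _ => by ring
  -- Cauchy-Schwarz
  have hfg : ∀ q : Fin n × (A × B),
      Real.sqrt (weight ξ' q.2 / n) *
        (Real.sqrt (weight ξ' q.2 / n) * |typeOf ξ' q.1 q.2 - typeOf ξ q.1 q.2.1|)
      = (weight ξ' q.2 / n) * |typeOf ξ' q.1 q.2 - typeOf ξ q.1 q.2.1| := by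
    intro q
    rw [← mul_assoc, Real.mul_self_sqrt (div_nonneg (hηnn q.2) hnR.le)]
  have hCS := Finset.sum_mul_sq_le_sq_mul_sq Finset.univ
    (fun q : Fin n × (A × B) => Real.sqrt (weight ξ' q.2 / n))
    (fun q : Fin n × (A × B) =>
      Real.sqrt (weight ξ' q.2 / n) * |typeOf ξ' q.1 q.2 - typeOf ξ q.1 q.2.1|)
  rw [Finset.sum_congr rfl fun q _ => hfg q] at hCS
  have hf2 : ∑ q : Fin n × (A × B), Real.sqrt (weight ξ' q.2 / n) ^ 2 = 1 := by
    have h1 : ∀ q : Fin n × (A × B), Real.sqrt (weight ξ' q.2 / n) ^ 2 = weight ξ' q.2 / n :=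
      fun q => Real.sq_sqrt (div_nonneg (hηnn q.2) hnR.le)
    rw [Finset.sum_congr rfl fun q _ => h1 q, Fintype.sum_prod_type]
    have h2 : ∀ i : Fin n, ∑ p : A × B, weight ξ' p / n = 1 / n := by
      intro i
      rw [← Finset.sum_div, hη1]
    rw [Finset.sum_congr rfl fun i _ => h2 i, Finset.sum_const, Finset.card_univ,
      Fintype.card_fin, nsmul_eq_mul]
    field_simp
  have hg2 : ∑ q : Fin n × (A × B),
      (Real.sqrt (weight ξ' q.2 / n) * |typeOf ξ' q.1 q.2 - typeOf ξ q.1 q.2.1|) ^ 2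
      = ind ξ' - ind ξ := by
    have h1 : ∀ q : Fin n × (A × B),
        (Real.sqrt (weight ξ' q.2 / n) * |typeOf ξ' q.1 q.2 - typeOf ξ q.1 q.2.1|) ^ 2
        = (weight ξ' q.2 * (typeOf ξ' q.1 q.2 - typeOf ξ q.1 q.2.1) ^ 2) / n := by
      intro q
      rw [mul_pow, Real.sq_sqrt (div_nonneg (hηnn q.2) hnR.le), sq_abs]
      ring
    rw [Finset.sum_congr rfl fun q _ => h1 q, Fintype.sum_prod_type, hDeq]
    rw [Finset.sum_div]
    exact Finset.sum_congr rfl fun i _ => by rw [Finset.sum_div]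
  rw [hf2, hg2, one_mul] at hCS
  have hcnn : 0 ≤ c := by
    rw [hcq]
    exact Finset.sum_nonneg fun q _ =>
      mul_nonneg (div_nonneg (hηnn q.2) hnR.le) (abs_nonneg _)
  have hc2 : c ^ 2 ≤ δ := by
    rw [hcq]
    exact le_trans hCS hind
  have hfinal : c ≤ Real.sqrt δ := (Real.le_sqrt hcnn hδ0.le).2 hc2
  exact le_trans (csInf_le hbdd hmem) hfinal
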